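/- arXiv:quant-ph/0206088 — 3 statements merged into one kernel-verified Lean document; each statement's English description precedes it below -/
import Mathlib

section
/- The squared overlap between Alice's honest state ψ₀ and her cheating state ψ̃₀ equals 3/4: |⟨ψ₀, ψ̃₀⟩|² = 3/4. Consequently, if Alice prepares ψ̃₀ instead of ψ₀, Bob's projective measurement onto ψ₀ accepts with probability exactly 3/4. -/
noncomputable section

/-- The standard orthonormal basis vector `e_{(i,j)}` of `ℂ³ ⊗ ℂ³`,
modelled as `EuclideanSpace ℂ (Fin 3 × Fin 3)`. -/
def e (p : Fin 3 × Fin 3) : EuclideanSpace ℂ (Fin 3 × Fin 3) :=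
  EuclideanSpace.single p 1

/-- The honest state `ψ₀ = (1/√2)(e_{(0,0)} + e_{(1,2)})`. -/
def ψ₀ : EuclideanSpace ℂ (Fin 3 × Fin 3) :=
  (1 / (Real.sqrt 2 : ℂ)) • (e (0, 0) + e (1, 2))

/-- Alice's cheating state `ψ̃₀ = (1/√6)(e_{(0,0)} + e_{(0,1)} + 2 e_{(1,2)})`. -/
def ψt₀ : EuclideanSpace ℂ (Fin 3 × Fin 3) :=
  (1 / (Real.sqrt 6 : ℂ)) • (e (0, 0) + e (0, 1) + (2 : ℂ) • e (1, 2))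

/-- The squared overlap between the honest state `ψ₀` and Alice's cheating state `ψ̃₀`
is `3/4`; this is the probability that Bob's projective measurement onto `ψ₀` accepts
when Alice prepared `ψ̃₀` instead of `ψ₀`. -/
theorem overlap_psi0_psit0 : ‖(inner ℂ ψ₀ ψt₀ : ℂ)‖ ^ 2 = 3 / 4 := by
  have h2 : (Real.sqrt 2 : ℂ) ≠ 0 := by
    exact_mod_cast Real.sqrt_ne_zero'.mpr (by norm_num)
  have h6 : (Real.sqrt 6 : ℂ) ≠ 0 := by
    exact_mod_cast Real.sqrt_ne_zero'.mpr (by norm_num)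
  have h : (inner ℂ ψ₀ ψt₀ : ℂ) = 3 / ((Real.sqrt 2 : ℂ) * (Real.sqrt 6 : ℂ)) := by
    simp only [ψ₀, ψt₀, e, inner_smul_left, inner_smul_right, inner_add_left,
      inner_add_right]
    rw [eq_div_iff (mul_ne_zero h2 h6)]
    simp [EuclideanSpace.inner_single_left, EuclideanSpace.single_apply,
      Prod.ext_iff, Fin.ext_iff, Fintype.sum_prod_type, Fin.sum_univ_three]
    field_simp
    ring
  rw [h, norm_div]
  have habs : ‖((Real.sqrt 2 : ℂ) * (Real.sqrt 6 : ℂ))‖ = Real.sqrt 12 := by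
    rw [norm_mul, Complex.norm_real, Complex.norm_real, Real.norm_eq_abs, Real.norm_eq_abs,
      abs_of_nonneg (Real.sqrt_nonneg _), abs_of_nonneg (Real.sqrt_nonneg _),
      ← Real.sqrt_mul (by norm_num)]
    norm_num
  rw [habs, div_pow, Real.sq_sqrt (by norm_num : (0:ℝ) ≤ 12),
    show ‖(3 : ℂ)‖ = 3 by norm_num]
  norm_num
end
end

section
/- Alice's cheating strategy succeeds with total probability 3/4: letting S ⊗ 1 be the map on ℂ³ ⊗ ℂ³ induced by the swap S of basis vectors e₀ and e₁ of the first factor (fixing e₂), one has (1/2)·|⟨ψ₀, ψ̃₀⟩|² + (1/2)·|⟨ψ₁, (S ⊗ 1) ψ̃₀⟩|² = 3/4. -/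
noncomputable section

/-- The honest state `ψ₁ = (1/√2)(e_{(1,1)} + e_{(0,2)})`. -/
def ψ₁ : EuclideanSpace ℂ (Fin 3 × Fin 3) :=
  (1 / (Real.sqrt 2 : ℂ)) • (e (1, 1) + e (0, 2))

/-- The swap of the indices `0` and `1` of `Fin 3` (fixing `2`). -/
def s : Fin 3 → Fin 3 := Equiv.swap (0 : Fin 3) 1

/-- The map `S ⊗ 1` on `ℂ³ ⊗ ℂ³` induced by the swap `S` of `e₀` and `e₁` in the first
factor (fixing `e₂`): `(S ⊗ 1) e_{(0,j)} = e_{(1,j)}`, `(S ⊗ 1) e_{(1,j)} = e_{(0,j)}`,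
`(S ⊗ 1) e_{(2,j)} = e_{(2,j)}`. -/
def S1 : EuclideanSpace ℂ (Fin 3 × Fin 3) →ₗ[ℂ] EuclideanSpace ℂ (Fin 3 × Fin 3) where
  toFun v := WithLp.toLp 2 (fun p => v (s p.1, p.2))
  map_add' v w := rfl
  map_smul' c v := rfl

/-- Alice's cheating strategy succeeds with total probability `3/4`: Bob's bit being
uniform, she prepares `ψ̃₀`, keeping it if `b_B = 0` and applying `S ⊗ 1` if `b_B = 1`,
so that Bob's measurement accepts outcome `0` resp. `1` with probability `3/4` each. -/
theorem alice_cheating_probability :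
    (1 / 2 : ℝ) * ‖(inner ℂ ψ₀ ψt₀ : ℂ)‖ ^ 2
      + (1 / 2 : ℝ) * ‖(inner ℂ ψ₁ (S1 ψt₀) : ℂ)‖ ^ 2 = 3 / 4 := by
  have h1 : (inner ℂ ψ₀ ψt₀ : ℂ) = 3 / (Real.sqrt 2 * Real.sqrt 6) := by
    simp [ψ₀, ψt₀, e, S1, s, PiLp.inner_apply, EuclideanSpace.single_apply,
      Fintype.sum_prod_type, Fin.sum_univ_succ, Equiv.swap_apply_def, Prod.ext_iff]
    ring
  have h1' : (inner ℂ ψ₁ (S1 ψt₀) : ℂ) = 3 / (Real.sqrt 2 * Real.sqrt 6) := by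
    simp [ψ₁, ψt₀, e, S1, s, PiLp.inner_apply, EuclideanSpace.single_apply,
      Fintype.sum_prod_type, Fin.sum_univ_succ, Equiv.swap_apply_def, Prod.ext_iff]
    ring
  have hv : Real.sqrt 2 * Real.sqrt 6 = Real.sqrt 12 := by
    rw [← Real.sqrt_mul (by norm_num)]; norm_num
  rw [h1, h1', norm_div]
  simp [abs_of_nonneg (Real.sqrt_nonneg _)]
  rw [← Real.sqrt_mul (by norm_num : (0:ℝ) ≤ 2)]
  rw [div_pow, Real.sq_sqrt (by norm_num : (0:ℝ) ≤ 2*6)]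
  norm_num
end
end

section
/- Naimark dilation of finite POVMs by a pure ancilla: let E : Fin m → M_n(ℂ) be a family of positive semidefinite matrices with Σ_x E x = 1. Then there exist d ≥ 1, a unit vector φ : Fin d → ℂ, and a family F : Fin m → M_{n·d}(ℂ) of Hermitian idempotent matrices (F x * F x = F x and (F x)ᴴ = F x) with Σ_x F x = 1, such that for every ρ ∈ M_n(ℂ): trace(E x * ρ) = trace(F x * (ρ ⊗ₖ Φ)) for all x, where Φ ∈ M_d(ℂ) is the matrix Φ a b = φ a · conj(φ b) and ⊗ₖ denotes the Kronecker product (so M_{n·d}(ℂ) is indexed by Fin n × Fin d). -/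
open Matrix
open scoped ComplexOrder Kronecker InnerProductSpace

noncomputable section NaimarkAux

variable {α β : Type*} [Fintype α] [Fintype β] [DecidableEq α] [DecidableEq β]

set_option linter.unusedSectionVars false

private lemma adj_comp_id (A : Matrix α β ℂ) (hA : Aᴴ * A = 1)
    (y : EuclideanSpace ℂ β) :
    LinearMap.adjoint (Matrix.toEuclideanLin A) (Matrix.toEuclideanLin A y) = y := by
  rw [← Matrix.toEuclideanLin_conjTranspose_eq_adjoint]
  simp [Matrix.toEuclideanLin_apply, Matrix.mulVec_mulVec, hA, Matrix.one_mulVec]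

private lemma toEuclideanLin_mul {γ : Type*} [Fintype γ] [DecidableEq γ]
    (A : Matrix α β ℂ) (B : Matrix β γ ℂ) :
    Matrix.toEuclideanLin (A * B)
      = (Matrix.toEuclideanLin A) ∘ₗ (Matrix.toEuclideanLin B) := by
  refine LinearMap.ext fun x => ?_
  simp [Matrix.toEuclideanLin_apply, Matrix.mulVec_mulVec]

private lemma toEuclideanLin_one :
    Matrix.toEuclideanLin (1 : Matrix α α ℂ) = LinearMap.id := by
  refine LinearMap.ext fun x => ?_
  simp [Matrix.toEuclideanLin_apply, Matrix.one_mulVec]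

private lemma inner_preserving (A : Matrix α β ℂ) (hA : Aᴴ * A = 1)
    (x y : EuclideanSpace ℂ β) :
    ⟪Matrix.toEuclideanLin A x, Matrix.toEuclideanLin A y⟫_ℂ = ⟪x, y⟫_ℂ := by
  rw [← LinearMap.adjoint_inner_left, adj_comp_id A hA]

/-- Two isometries (matrices with orthonormal columns) into the same space are
related by a unitary. -/
private lemma exists_unitary_mul_eq (W V : Matrix α β ℂ)
    (hW : Wᴴ * W = 1) (hV : Vᴴ * V = 1) :
    ∃ U : Matrix α α ℂ, Uᴴ * U = 1 ∧ U * W = V := by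
  classical
  set Wl := Matrix.toEuclideanLin W with hWl
  set Vl := Matrix.toEuclideanLin V with hVl
  have hWinj : Function.Injective Wl := by
    intro x y h
    have hx := adj_comp_id W hW x
    rw [h, adj_comp_id W hW y] at hx
    exact hx.symm
  set S : Submodule ℂ (EuclideanSpace ℂ α) := LinearMap.range Wl with hS
  set e : EuclideanSpace ℂ β ≃ₗ[ℂ] S := LinearEquiv.ofInjective Wl hWinj with he
  have hes : ∀ x, ((e x : EuclideanSpace ℂ α)) = Wl x := fun x => rfl
  set L : S →ₗᵢ[ℂ] EuclideanSpace ℂ α :=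
    { toLinearMap := Vl ∘ₗ e.symm.toLinearMap
      norm_map' := by
        intro s
        have h1 : Wl (e.symm s) = (s : EuclideanSpace ℂ α) := by
          rw [← hes, LinearEquiv.apply_symm_apply]
        have hv := inner_preserving V hV (e.symm s) (e.symm s)
        have hw := inner_preserving W hW (e.symm s) (e.symm s)
        have h2 : ⟪Vl (e.symm s), Vl (e.symm s)⟫_ℂ
            = ⟪(s : EuclideanSpace ℂ α), (s : EuclideanSpace ℂ α)⟫_ℂ := by
          rw [← h1]; rw [hv, hw]
        have h3 : ‖Vl (e.symm s)‖ = ‖(s : EuclideanSpace ℂ α)‖ := by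
          rw [norm_eq_sqrt_re_inner (𝕜 := ℂ), norm_eq_sqrt_re_inner (𝕜 := ℂ), h2]
        show ‖Vl (e.symm s)‖ = ‖s‖
        rw [h3]; rfl } with hL
  set U0 : EuclideanSpace ℂ α →ₗᵢ[ℂ] EuclideanSpace ℂ α := L.extend with hU0
  have hkey : ∀ ξ, U0 (Wl ξ) = Vl ξ := by
    intro ξ
    have : Wl ξ = ((e ξ : S) : EuclideanSpace ℂ α) := (hes ξ).symm
    rw [this]
    have := L.extend_apply (e ξ)
    rw [hU0, this]
    show Vl (e.symm (e ξ)) = Vl ξ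
    rw [LinearEquiv.symm_apply_apply]
  set Um := Matrix.toEuclideanLin.symm U0.toLinearMap with hUm
  have hU : Matrix.toEuclideanLin Um = U0.toLinearMap :=
    Matrix.toEuclideanLin.apply_symm_apply _
  refine ⟨Um, ?_, ?_⟩
  · apply Matrix.toEuclideanLin.injective
    rw [toEuclideanLin_mul, toEuclideanLin_one,
      Matrix.toEuclideanLin_conjTranspose_eq_adjoint, hU]
    refine LinearMap.ext fun x => ?_
    refine ext_inner_left ℂ fun v => ?_
    rw [LinearMap.comp_apply, LinearMap.adjoint_inner_right]
    exact U0.inner_map_map v x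
  · apply Matrix.toEuclideanLin.injective
    rw [toEuclideanLin_mul, hU, ← hWl, ← hVl]
    exact LinearMap.ext fun ξ => hkey ξ

end NaimarkAux

/-- Naimark dilation of finite POVMs by a pure ancilla: every POVM
`E : Fin m → M_n(ℂ)` (positive semidefinite matrices summing to `1`) can be dilated,
using an ancilla in a pure state `φ`, to a projection-valued measure
`F : Fin m → M_{n·d}(ℂ)` reproducing all outcome probabilities:
`tr(E x · ρ) = tr(F x · (ρ ⊗ |φ⟩⟨φ|))` for every state `ρ`. -/
theorem naimark_dilation_pure_ancilla (n m : ℕ) (E : Fin m → Matrix (Fin n) (Fin n) ℂ)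
    (hpos : ∀ x, (E x).PosSemidef) (hsum : ∑ x, E x = 1) :
    ∃ d : ℕ, 1 ≤ d ∧
      ∃ (φ : Fin d → ℂ) (F : Fin m → Matrix (Fin n × Fin d) (Fin n × Fin d) ℂ),
        (∑ a : Fin d, ‖φ a‖ ^ 2 = 1) ∧
        (∀ x, F x * F x = F x) ∧
        (∀ x, (F x)ᴴ = F x) ∧
        (∑ x, F x = 1) ∧
        ∀ (ρ : Matrix (Fin n) (Fin n) ℂ) (x : Fin m),
          (E x * ρ).trace =
            (F x * (ρ ⊗ₖ Matrix.of (fun a b : Fin d => φ a * (starRingEnd ℂ) (φ b)))).trace := by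
  classical
  rcases Nat.eq_zero_or_pos m with hm | hm
  · -- degenerate case: m = 0 forces n = 0
    subst hm
    rcases Nat.eq_zero_or_pos n with hn | hn
    · subst hn
      refine ⟨1, le_refl 1, fun _ => 1, fun x => x.elim0, by simp, fun x => x.elim0,
        fun x => x.elim0, ?_, fun ρ x => x.elim0⟩
      ext ⟨i, a⟩ j
      exact i.elim0
    · exfalso
      rw [Fin.sum_univ_zero] at hsum
      have h := Matrix.ext_iff.mpr hsum ⟨0, hn⟩ ⟨0, hn⟩
      rw [Matrix.one_apply_eq] at h
      simpa using h
  · -- main case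
    have : NeZero m := ⟨by omega⟩
    set x₀ : Fin m := ⟨0, hm⟩ with hx₀
    set φ : Fin m → ℂ := fun a => if a = x₀ then 1 else 0 with hφ
    have hφ1 : ∑ a : Fin m, ‖φ a‖ ^ 2 = 1 := by
      simp only [hφ]
      rw [Finset.sum_eq_single x₀]
      · simp
      · intro b _ hb; simp [hb]
      · intro h; exact absurd (Finset.mem_univ x₀) h
    set R : Fin m → Matrix (Fin n) (Fin n) ℂ := fun y => (open scoped MatrixOrder in CFC.sqrt (E y)) with hRdef
    have hRH : ∀ y, (R y)ᴴ = R y := fun y => open scoped MatrixOrder in (CFC.sqrt_nonneg (E y)).posSemidef.1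
    have hRR : ∀ y, R y * R y = E y := fun y => open scoped MatrixOrder in CFC.sqrt_mul_sqrt_self (E y) (hpos y).nonneg
    set W : Matrix (Fin n × Fin m) (Fin n) ℂ :=
      Matrix.of (fun p j => if p.1 = j then φ p.2 else 0) with hWdef
    set V : Matrix (Fin n × Fin m) (Fin n) ℂ :=
      Matrix.of (fun p j => R p.2 p.1 j) with hVdef
    set Q : Fin m → Matrix (Fin n × Fin m) (Fin n × Fin m) ℂ :=
      fun x => Matrix.of (fun p q => if p = q ∧ p.2 = x then (1 : ℂ) else 0) with hQdef
    have hWiso : Wᴴ * W = 1 := by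
      ext j k
      simp only [Matrix.mul_apply, Matrix.conjTranspose_apply, hWdef, Matrix.of_apply,
        Fintype.sum_prod_type, hφ, Matrix.one_apply]
      simp [apply_ite, Finset.sum_ite_eq', ite_and, Finset.sum_ite_eq]
      by_cases h : j = k <;> simp [h, eq_comm]
    clear_value φ
    have hViso : Vᴴ * V = 1 := by
      have step : Vᴴ * V = ∑ y, (R y)ᴴ * R y := by
        ext j k
        simp only [Matrix.mul_apply, Matrix.conjTranspose_apply, hVdef, Matrix.of_apply,
          Fintype.sum_prod_type, Finset.sum_apply, Matrix.sum_apply]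
        rw [Finset.sum_comm]
      rw [step]
      calc (∑ y, (R y)ᴴ * R y) = ∑ y, E y := by
            refine Finset.sum_congr rfl fun y _ => ?_
            rw [hRH, hRR]
        _ = 1 := hsum
    have hQQ : ∀ x, Q x * Q x = Q x := by
      intro x
      ext p q
      simp only [Matrix.mul_apply, hQdef, Matrix.of_apply]
      rcases p with ⟨i, a⟩
      simp [ite_and, Finset.sum_ite_eq, apply_ite]
      aesop
    have hQH : ∀ x, (Q x)ᴴ = Q x := by
      intro x
      ext p q
      simp only [Matrix.conjTranspose_apply, hQdef, Matrix.of_apply]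
      by_cases h : p = q
      · subst h; simp
      · rw [if_neg (by tauto), if_neg (by tauto)]
        simp
    have hQsum : (∑ x, Q x) = 1 := by
      ext p q
      simp only [Matrix.sum_apply, hQdef, Matrix.of_apply, Matrix.one_apply]
      by_cases h : p = q
      · subst h; simp
      · simp [h]
    have hQV : ∀ x, Q x * V = Matrix.of (fun p j => if p.2 = x then V p j else 0) := by
      intro x
      ext p k
      simp only [Matrix.mul_apply, hQdef, Matrix.of_apply, ite_and, ite_mul, one_mul, zero_mul]
      rw [Finset.sum_ite_eq]
      simp
    have hVQV : ∀ x, Vᴴ * (Q x * V) = E x := by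
      intro x
      rw [hQV]
      have step : Vᴴ * Matrix.of (fun p j => if p.2 = x then V p j else 0) = (R x)ᴴ * R x := by
        ext j k
        simp only [Matrix.mul_apply, Matrix.conjTranspose_apply, hVdef, Matrix.of_apply,
          Fintype.sum_prod_type, mul_ite, mul_zero]
        rw [Finset.sum_comm]
        simp [Finset.sum_ite_eq, apply_ite]
      rw [step, hRH, hRR]
    have hWρ : ∀ ρ : Matrix (Fin n) (Fin n) ℂ,
        W * ρ = Matrix.of (fun p l => φ p.2 * ρ p.1 l) := by
      intro ρ
      ext p l
      rcases p with ⟨i, a⟩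
      simp only [Matrix.mul_apply, hWdef, Matrix.of_apply, ite_mul, zero_mul]
      rw [Finset.sum_ite_eq]
      simp
    have hKron : ∀ ρ : Matrix (Fin n) (Fin n) ℂ,
        ρ ⊗ₖ Matrix.of (fun a b : Fin m => φ a * (starRingEnd ℂ) (φ b)) = W * ρ * Wᴴ := by
      intro ρ
      ext p q
      rcases p with ⟨i, a⟩
      rcases q with ⟨j, b⟩
      rw [hWρ]
      simp only [Matrix.kroneckerMap_apply, Matrix.of_apply, Matrix.mul_apply,
        Matrix.conjTranspose_apply, hWdef, apply_ite (star : ℂ → ℂ), star_zero, mul_ite, mul_zero]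
      rw [Finset.sum_ite_eq]
      simp only [Finset.mem_univ, if_true, starRingEnd_apply]
      ring
    obtain ⟨U, hU1, hUW⟩ := exists_unitary_mul_eq W V hWiso hViso
    have hU2 : U * Uᴴ = 1 := mul_eq_one_comm.mp hU1
    refine ⟨m, hm, φ, fun x => Uᴴ * Q x * U, hφ1, ?_, ?_, ?_, ?_⟩
    · intro x
      calc (Uᴴ * Q x * U) * (Uᴴ * Q x * U)
          = Uᴴ * Q x * (U * Uᴴ) * (Q x * U) := by
            simp only [Matrix.mul_assoc]
        _ = Uᴴ * (Q x * Q x) * U := by rw [hU2]; simp only [Matrix.mul_assoc, Matrix.one_mul]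
        _ = Uᴴ * Q x * U := by rw [hQQ]
    · intro x
      simp only [Matrix.conjTranspose_mul, Matrix.conjTranspose_conjTranspose, hQH,
        Matrix.mul_assoc]
    · rw [← Finset.sum_mul, ← Finset.mul_sum, hQsum, Matrix.mul_one, hU1]
    · intro ρ x
      rw [hKron]
      have hadj : Wᴴ * Uᴴ = Vᴴ := by rw [← Matrix.conjTranspose_mul, hUW]
      have e1 : Uᴴ * Q x * U * (W * ρ * Wᴴ) = Uᴴ * (Q x * (V * (ρ * Wᴴ))) := by
        rw [← hUW]; simp only [Matrix.mul_assoc]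
      have e2 : Vᴴ * (Q x * V) * ρ = Vᴴ * (Q x * (V * ρ)) := by
        simp only [Matrix.mul_assoc]
      rw [← hVQV x, e1, e2, Matrix.trace_mul_comm (Vᴴ), Matrix.trace_mul_comm (Uᴴ)]
      congr 1
      simp only [Matrix.mul_assoc, hadj]
end
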